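/- Let F be a finite field of cardinality c, m, n be positive integers, and A ∈ M_{m×n}(F) be a matrix of rank 2. Let d be a 1-dimensional subspace of F^n and e a 1-dimensional subspace of ᵗF^m. Then: (1) the set of matrices in R_d that are adjacent to A is either empty or has exactly c elements, and it has exactly c elements when m = n = 2; (2) the same holds for the set of matrices in L_e that are adjacent to A; (3) the set of rank 1 matrices in A + R_d is either empty or has exactly c elements, and it has exactly c elements when m = n = 2; (4) the same holds for the set of rank 1 matrices in A + L_e. -/

import Mathlib

open Matrix

variable {D : Type*} [DivisionRing D]

/-- The rank of a matrix over a division ring: the dimension of its row space,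
i.e. of the left `D`-subspace of `D^n` spanned by the rows. -/
noncomputable def rowRank {m n : ℕ} (A : Matrix (Fin m) (Fin n) D) : ℕ :=
  Module.finrank D (Submodule.span D (Set.range fun i => A i))

/-- Two matrices are adjacent if their difference has rank one. -/
def Adjacent {m n : ℕ} (A B : Matrix (Fin m) (Fin n) D) : Prop :=
  rowRank (A - B) = 1

/-- `R(x)`: the set of matrices of the form `ᵗu x` for a fixed row vector `x`. -/
def Rvec {m n : ℕ} (x : Fin n → D) : Set (Matrix (Fin m) (Fin n) D) :=
  { M | ∃ u : Fin m → D, ∀ i j, M i j = u i * x j }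

/-- `L(ᵗy)`: the set of matrices of the form `ᵗy v` for a fixed column vector `ᵗy`. -/
def Lvec {m n : ℕ} (y : Fin m → D) : Set (Matrix (Fin m) (Fin n) D) :=
  { M | ∃ v : Fin n → D, ∀ i j, M i j = y i * v j }

/-- `R_d`: the matrices whose row space is contained in `d`. -/
def Rsub {m n : ℕ} (d : Submodule D (Fin n → D)) : Set (Matrix (Fin m) (Fin n) D) :=
  { M | ∀ i, M i ∈ d }

/-- `L_e`: the matrices whose column space (a right subspace, i.e. a `Dᵐᵒᵖ`-submodule)
is contained in `e`. -/
def Lsub {m n : ℕ} (e : Submodule Dᵐᵒᵖ (Fin m → D)) : Set (Matrix (Fin m) (Fin n) D) :=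
  { M | ∀ j, (fun i => M i j) ∈ e }

/-- The orthogonal set of a set `e` of column vectors. -/
def perpSet {m : ℕ} (e : Set (Fin m → D)) : Set (Fin m → D) :=
  { u | ∀ v ∈ e, ∑ i, u i * v i = 0 }

/-- The `p × q` matrix with upper-left block `B` and zeros elsewhere. -/
def pad {m n : ℕ} (p q : ℕ) (B : Matrix (Fin m) (Fin n) D) :
    Matrix (Fin p) (Fin q) D :=
  Matrix.of fun i j =>
    if hi : (i : ℕ) < m then if hj : (j : ℕ) < n then B ⟨i, hi⟩ ⟨j, hj⟩ else 0 else 0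

/-- `φ` is degenerate with respect to `A`. -/
def DegenerateAt {m n p q : ℕ} (φ : Matrix (Fin m) (Fin n) D → Matrix (Fin p) (Fin q) D)
    (A : Matrix (Fin m) (Fin n) D) : Prop :=
  ∃ x : Fin p → D, x ≠ 0 ∧ ∃ y : Fin q → D, y ≠ 0 ∧
    ∀ M : Matrix (Fin m) (Fin n) D, rowRank M ≤ 1 →
      φ (A + M) - φ A ∈ Rvec y ∪ Lvec x

/-- `φ` is degenerate: degenerate with respect to every matrix. -/
def Degenerate {m n p q : ℕ} (φ : Matrix (Fin m) (Fin n) D → Matrix (Fin p) (Fin q) D) :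
    Prop :=
  ∀ A, DegenerateAt φ A

/-- A map (sending `0` to `0`) is degenerate with respect to `0` iff it maps every matrix of
rank at most one into `R(y) ∪ L(ᵗx)` for some nonzero `y`, `x`. -/
def DegZero {m n p q : ℕ} (φ : Matrix (Fin m) (Fin n) D → Matrix (Fin p) (Fin q) D) :
    Prop :=
  ∃ x : Fin p → D, x ≠ 0 ∧ ∃ y : Fin q → D, y ≠ 0 ∧
    ∀ M : Matrix (Fin m) (Fin n) D, rowRank M ≤ 1 → φ M ∈ Rvec y ∪ Lvec x

/-- A standard adjacency preserver. -/
def Standard {m n p q : ℕ} (φ : Matrix (Fin m) (Fin n) D → Matrix (Fin p) (Fin q) D) :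
    Prop :=
  (m ≤ p ∧ n ≤ q ∧ ∃ τ : D ≃+* D, ∃ T : Matrix (Fin p) (Fin p) D,
    ∃ S : Matrix (Fin q) (Fin q) D, ∃ R : Matrix (Fin p) (Fin q) D,
    IsUnit T ∧ IsUnit S ∧ ∀ A, φ A = T * pad p q (A.map τ) * S + R) ∨
  (n ≤ p ∧ m ≤ q ∧ ∃ σ : D → D, Function.Bijective σ ∧ σ 1 = 1 ∧
    (∀ a b, σ (a + b) = σ a + σ b) ∧ (∀ a b, σ (a * b) = σ b * σ a) ∧
    ∃ T : Matrix (Fin p) (Fin p) D, ∃ S : Matrix (Fin q) (Fin q) D,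
    ∃ R : Matrix (Fin p) (Fin q) D, IsUnit T ∧ IsUnit S ∧
    ∀ A, φ A = T * pad p q (A.map σ).transpose * S + R)

/-- A division ring is EAS if every (unital) ring endomorphism of it is surjective. -/
def EAS (D : Type*) [DivisionRing D] : Prop :=
  ∀ f : D →+* D, Function.Surjective f

/-- A set of matrices is adjacent if any two distinct members are adjacent. -/
def IsAdjacentSet {m n : ℕ} (S : Set (Matrix (Fin m) (Fin n) D)) : Prop :=
  ∀ A ∈ S, ∀ B ∈ S, A ≠ B → Adjacent A B

section Aux
open Module Submodule

variable {F : Type*} [Field F] {m n : ℕ}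

lemma vecMulVec_row (u : Fin m → F) (x : Fin n → F) (i : Fin m) :
    vecMulVec u x i = u i • x := by
  funext j; simp [vecMulVec_apply]

lemma rowRank_le_of_mem {M : Matrix (Fin m) (Fin n) F} {p : Submodule F (Fin n → F)}
    (h : ∀ i, M i ∈ p) : rowRank M ≤ finrank F p :=
  Submodule.finrank_mono (span_le.2 (by rintro _ ⟨i, rfl⟩; exact h i))

lemma finrank_span_single_le (x : Fin n → F) :
    finrank F (Submodule.span F {x} : Submodule F (Fin n → F)) ≤ 1 := by
  rcases eq_or_ne x 0 with rfl | hx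
  · rw [Submodule.span_zero_singleton, finrank_bot]; omega
  · rw [finrank_span_singleton hx]

lemma rows_vecMulVec_mem (u : Fin m → F) (x : Fin n → F) (i : Fin m) :
    vecMulVec u x i ∈ Submodule.span F {x} := by
  rw [vecMulVec_row]; exact Submodule.smul_mem _ _ (Submodule.mem_span_singleton_self x)

lemma rowRank_vecMulVec {u : Fin m → F} {x : Fin n → F} (hu : u ≠ 0) (hx : x ≠ 0) :
    rowRank (vecMulVec u x) = 1 := by
  obtain ⟨i, hi⟩ := Function.ne_iff.1 hu
  have hi : u i ≠ 0 := hi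
  have h1 : Submodule.span F (Set.range fun k => vecMulVec u x k) = Submodule.span F {x} := by
    apply le_antisymm
    · exact Submodule.span_le.2 (by rintro _ ⟨j, rfl⟩; exact rows_vecMulVec_mem u x j)
    · rw [Submodule.span_singleton_le_iff_mem]
      have hxx : x = (u i)⁻¹ • (vecMulVec u x i) := by
        rw [vecMulVec_row, smul_smul, inv_mul_cancel₀ hi, one_smul]
      have hmem : (u i)⁻¹ • (vecMulVec u x i) ∈
          Submodule.span F (Set.range fun k => vecMulVec u x k) :=
        Submodule.smul_mem _ _ (Submodule.subset_span ⟨i, rfl⟩)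
      rwa [← hxx] at hmem
  rw [rowRank, h1, finrank_span_singleton hx]

lemma rowRank_zero : rowRank (0 : Matrix (Fin m) (Fin n) F) = 0 := by
  have h : Submodule.span F (Set.range fun i => (0 : Matrix (Fin m) (Fin n) F) i) = ⊥ := by
    rw [Submodule.span_eq_bot]; rintro _ ⟨i, rfl⟩; rfl
  rw [rowRank, h, finrank_bot]

lemma exists_vecMulVec {M : Matrix (Fin m) (Fin n) F} (h : rowRank M = 1) :
    ∃ w z, w ≠ 0 ∧ z ≠ 0 ∧ M = vecMulVec w z := by
  have h1 : Module.finrank F (Submodule.span F (Set.range fun i => M i)) = 1 := h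
  obtain ⟨v, hv0, hv⟩ := finrank_eq_one_iff'.1 h1
  choose w hw using fun i =>
    hv ⟨M i, Submodule.subset_span (Set.mem_range_self i)⟩
  have hrow : ∀ i, M i = w i • (v : Fin n → F) := fun i => (congrArg Subtype.val (hw i)).symm
  have hM : M = vecMulVec w (v : Fin n → F) := by
    funext i j
    have := congrFun (hrow i) j
    simpa [vecMulVec_apply] using this
  refine ⟨w, v, ?_, fun hz => hv0 (Subtype.ext hz), hM⟩
  rintro rfl
  have h0 : vecMulVec (0 : Fin m → F) (v : Fin n → F) = 0 := by
    funext i j; simp [vecMulVec_apply]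
  rw [hM, h0, rowRank_zero] at h
  omega

lemma mem_Rsub_span_iff {M : Matrix (Fin m) (Fin n) F} {x : Fin n → F} :
    M ∈ Rsub (m := m) (Submodule.span F {x}) ↔ ∃ u, M = vecMulVec u x := by
  constructor
  · intro h
    choose u hu using fun i => Submodule.mem_span_singleton.1 (h i)
    refine ⟨u, ?_⟩
    funext i j
    have := congrFun (hu i) j
    simpa [vecMulVec_apply] using this.symm
  · rintro ⟨u, rfl⟩ i; exact rows_vecMulVec_mem u x i

lemma rowRank_neg (M : Matrix (Fin m) (Fin n) F) : rowRank (-M) = rowRank M := by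
  have key : ∀ X : Matrix (Fin m) (Fin n) F,
      Submodule.span F (Set.range fun i => (-X) i) ≤ Submodule.span F (Set.range fun i => X i) := by
    intro X
    rw [Submodule.span_le]; rintro _ ⟨i, rfl⟩
    show (-X) i ∈ _
    have hXi : (-X) i = (-1 : F) • X i := by funext j; simp
    rw [hXi]
    exact Submodule.smul_mem _ _ (Submodule.subset_span ⟨i, rfl⟩)
  have h2 := key (-M); rw [neg_neg] at h2
  exact Nat.le_antisymm (Submodule.finrank_mono (key M)) (Submodule.finrank_mono h2)

lemma rowRank_eq_rank (A : Matrix (Fin m) (Fin n) F) : rowRank A = A.rank :=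
  (rank_eq_finrank_span_row A).symm

lemma rowRank_transpose (A : Matrix (Fin m) (Fin n) F) : rowRank Aᵀ = rowRank A := by
  rw [rowRank_eq_rank, rowRank_eq_rank, rank_transpose]

lemma exists_det_ne {w v : Fin m → F} (hw : w ≠ 0) (h : ¬ ∃ c : F, v = c • w) :
    ∃ i j, w i * v j ≠ w j * v i := by
  by_contra hc
  push_neg at hc
  obtain ⟨i0, hi0⟩ := Function.ne_iff.1 hw
  have hi0 : w i0 ≠ 0 := hi0
  refine h ⟨v i0 * (w i0)⁻¹, funext fun j => ?_⟩
  have hcalc : v j = v i0 * (w i0)⁻¹ * w j := by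
    field_simp
    rw [mul_comm (v j) (w i0), hc i0 j, mul_comm]
  simpa [Pi.smul_apply, smul_eq_mul] using hcalc

lemma pair_indep {z x : Fin n → F} (hx : x ≠ 0) (h : ¬ ∃ a : F, z = a • x) :
    LinearIndependent F ![z, x] := by
  rw [LinearIndependent.pair_iff]
  intro s t hst
  rcases eq_or_ne s 0 with rfl | hs
  · rw [zero_smul, zero_add] at hst
    rcases smul_eq_zero.1 hst with ht | hx0
    exacts [⟨rfl, ht⟩, absurd hx0 hx]
  · exfalso
    apply h
    have h1 : s • z = -(t • x) := by rwa [add_eq_zero_iff_eq_neg] at hst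
    have hz : z = s⁻¹ • (-(t • x)) := by
      rw [← h1, smul_smul, inv_mul_cancel₀ hs, one_smul]
    exact ⟨-(s⁻¹ * t), by rw [hz, smul_neg, smul_smul, neg_smul]⟩

lemma two_le_rowRank {M : Matrix (Fin m) (Fin n) F} {z x : Fin n → F}
    (hind : LinearIndependent F ![z, x])
    (hz : z ∈ Submodule.span F (Set.range fun i => M i))
    (hx : x ∈ Submodule.span F (Set.range fun i => M i)) : 2 ≤ rowRank M := by
  have hle : Submodule.span F (Set.range ![z, x]) ≤ Submodule.span F (Set.range fun i => M i) := by
    rw [Submodule.span_le]; rintro _ ⟨i, rfl⟩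
    fin_cases i
    · simpa using hz
    · simpa using hx
  have hmono := Submodule.finrank_mono hle
  rwa [finrank_span_eq_card hind, Fintype.card_fin] at hmono

end Aux
section Key
open Module Submodule

variable {F : Type*} [Field F] [Fintype F] {m n : ℕ}

lemma key_count (A : Matrix (Fin m) (Fin n) F) (hA : rowRank A = 2)
    (x : Fin n → F) (hx : x ≠ 0) :
    ({M : Matrix (Fin m) (Fin n) F |
        rowRank M = 1 ∧ ∃ N ∈ Rsub (m := m) (Submodule.span F {x}), M = A + N}.ncard = 0 ∨
      {M : Matrix (Fin m) (Fin n) F |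
        rowRank M = 1 ∧ ∃ N ∈ Rsub (m := m) (Submodule.span F {x}), M = A + N}.ncard =
        Fintype.card F) ∧
    (m = 2 ∧ n = 2 →
      {M : Matrix (Fin m) (Fin n) F |
        rowRank M = 1 ∧ ∃ N ∈ Rsub (m := m) (Submodule.span F {x}), M = A + N}.ncard =
        Fintype.card F) := by
  set T := {M : Matrix (Fin m) (Fin n) F |
      rowRank M = 1 ∧ ∃ N ∈ Rsub (m := m) (Submodule.span F {x}), M = A + N} with hT
  have main : T.Nonempty → T.ncard = Fintype.card F := by
    rintro ⟨B, hB1, N, hN, hBeq⟩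
    obtain ⟨u, rfl⟩ := mem_Rsub_span_iff.1 hN
    subst hBeq
    obtain ⟨w, z, hw, hz, hrep⟩ := exists_vecMulVec hB1
    have hAeq : ∀ i j, A i j = w i * z j - u i * x j := by
      intro i j
      have h := congrFun (congrFun hrep i) j
      simp only [Matrix.add_apply, vecMulVec_apply] at h
      exact eq_sub_of_add_eq h
    have hzx : ¬ ∃ a : F, z = a • x := by
      rintro ⟨a, rfl⟩
      have hmem : ∀ i, A i ∈ Submodule.span F {x} := by
        intro i
        have hAi : A i = (w i * a - u i) • x := by
          funext j; simp only [hAeq, Pi.smul_apply, smul_eq_mul]; ring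
        rw [hAi]
        exact Submodule.smul_mem _ _ (Submodule.mem_span_singleton_self x)
      have h1 := rowRank_le_of_mem hmem
      have h2 := finrank_span_single_le x
      omega
    -- the set is the image of scalars
    have hTeq : T = (fun c : F => vecMulVec w (z + c • x)) '' Set.univ := by
      ext M
      simp only [hT, Set.mem_setOf_eq, Set.mem_image, Set.mem_univ, true_and]
      constructor
      · rintro ⟨hM1, N', hN', rfl⟩
        obtain ⟨u', rfl⟩ := mem_Rsub_span_iff.1 hN'
        set v := u' - u with hv
        have hMrow : ∀ i j, (A + vecMulVec u' x) i j = w i * z j + v i * x j := by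
          intro i j
          simp only [Matrix.add_apply, vecMulVec_apply, hAeq, hv, Pi.sub_apply]
          ring
        by_cases hc : ∃ c : F, v = c • w
        · obtain ⟨c, hc2⟩ := hc
          refine ⟨c, ?_⟩
          funext i j
          have hvi : v i = c * w i := by rw [hc2]; simp
          simp only [vecMulVec_apply, Pi.add_apply, Pi.smul_apply, smul_eq_mul, hMrow i j, hvi]
          ring
        · exfalso
          obtain ⟨i, j, hD⟩ := exists_det_ne hw hc
          set Sp := Submodule.span F (Set.range fun k => (A + vecMulVec u' x) k) with hSp
          have hrowmem : ∀ k, (A + vecMulVec u' x) k ∈ Sp := fun k => Submodule.subset_span ⟨k, rfl⟩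
          set D := w i * v j - w j * v i with hDdef
          have hD0 : D ≠ 0 := sub_ne_zero.2 hD
          have hzmem : z ∈ Sp := by
            have hcomb : z = (D⁻¹ * v j) • (A + vecMulVec u' x) i
                - (D⁻¹ * v i) • (A + vecMulVec u' x) j := by
              funext k
              simp only [Pi.sub_apply, Pi.smul_apply, smul_eq_mul, hMrow i k, hMrow j k]
              field_simp
              ring
            rw [hcomb]
            exact Submodule.sub_mem _ (Submodule.smul_mem _ _ (hrowmem i))
              (Submodule.smul_mem _ _ (hrowmem j))
          have hxmem : x ∈ Sp := by
            have hcomb : x = (D⁻¹ * w i) • (A + vecMulVec u' x) j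
                - (D⁻¹ * w j) • (A + vecMulVec u' x) i := by
              funext k
              simp only [Pi.sub_apply, Pi.smul_apply, smul_eq_mul, hMrow i k, hMrow j k]
              field_simp
              ring
            rw [hcomb]
            exact Submodule.sub_mem _ (Submodule.smul_mem _ _ (hrowmem j))
              (Submodule.smul_mem _ _ (hrowmem i))
          have h2 := two_le_rowRank (pair_indep hx hzx) hzmem hxmem
          rw [rowRank] at hM1 h2
          rw [hSp] at hzmem hxmem
          omega
      · rintro ⟨c, rfl⟩
        refine ⟨?_, vecMulVec (u + c • w) x, mem_Rsub_span_iff.2 ⟨_, rfl⟩, ?_⟩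
        · refine rowRank_vecMulVec hw fun h0 => hzx ⟨-c, ?_⟩
          rw [neg_smul]
          exact eq_neg_of_add_eq_zero_left h0
        · funext i j
          simp only [vecMulVec_apply, Matrix.add_apply, hAeq, Pi.add_apply, Pi.smul_apply,
            smul_eq_mul]
          ring
    have hinj : Function.Injective (fun c : F => vecMulVec w (z + c • x)) := by
      intro c c' hcc
      obtain ⟨i, hi⟩ := Function.ne_iff.1 hw
      have hi : w i ≠ 0 := hi
      obtain ⟨k, hk⟩ := Function.ne_iff.1 hx
      have hk : x k ≠ 0 := hk
      have h := congrFun (congrFun hcc i) k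
      simp only [vecMulVec_apply, Pi.add_apply, Pi.smul_apply, smul_eq_mul] at h
      have h2 := mul_left_cancel₀ hi h
      have h3 := add_left_cancel h2
      exact mul_right_cancel₀ hk h3
    rw [hTeq, Set.ncard_image_of_injective _ hinj, Set.ncard_univ, Nat.card_eq_fintype_card]
  constructor
  · rcases T.eq_empty_or_nonempty with he | hne
    · left; rw [he, Set.ncard_empty]
    · right; exact main hne
  · rintro ⟨rfl, rfl⟩
    apply main
    have hspan : Submodule.span F (Set.range fun i => A i) = ⊤ := by
      apply Submodule.eq_top_of_finrank_eq
      have : Module.finrank F (Submodule.span F (Set.range fun i => A i)) = 2 := hA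
      rw [this, Module.finrank_fin_fun]
    have hxmem : x ∈ Submodule.span F (Set.range fun i => A i) := by
      rw [hspan]; exact Submodule.mem_top
    have hrange : (Set.range fun i : Fin 2 => A i) = {A 0, A 1} := by
      ext v
      constructor
      · rintro ⟨i, rfl⟩; fin_cases i <;> simp
      · rintro (rfl | rfl)
        exacts [⟨0, rfl⟩, ⟨1, rfl⟩]
    rw [hrange] at hxmem
    obtain ⟨a, b, hab⟩ := Submodule.mem_span_pair.1 hxmem
    have hA0 : A 0 ≠ 0 := by
      intro h0
      have hmem : ∀ i, A i ∈ Submodule.span F {A 1} := by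
        intro i; fin_cases i
        · show A 0 ∈ _; rw [h0]; exact Submodule.zero_mem _
        · show A 1 ∈ _; exact Submodule.mem_span_singleton_self _
      have h1 := rowRank_le_of_mem hmem
      have h2 := finrank_span_single_le (A 1)
      omega
    have hA1 : A 1 ≠ 0 := by
      intro h0
      have hmem : ∀ i, A i ∈ Submodule.span F {A 0} := by
        intro i; fin_cases i
        · show A 0 ∈ _; exact Submodule.mem_span_singleton_self _
        · show A 1 ∈ _; rw [h0]; exact Submodule.zero_mem _
      have h1 := rowRank_le_of_mem hmem
      have h2 := finrank_span_single_le (A 0)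
      omega
    rcases eq_or_ne a 0 with rfl | ha
    · have hb : b ≠ 0 := by
        rintro rfl
        apply hx
        rw [← hab]; funext j; simp
      have hxj : ∀ j, x j = b * A 1 j := by
        intro j
        have := congrFun hab j
        simpa using this.symm
      refine ⟨vecMulVec ![1, 0] (A 0), ?_, vecMulVec ![0, -b⁻¹] x,
        mem_Rsub_span_iff.2 ⟨_, rfl⟩, ?_⟩
      · refine rowRank_vecMulVec ?_ hA0
        intro h0; have := congrFun h0 0; simp at this
      · funext i j
        fin_cases i <;>
          simp only [vecMulVec_apply, Matrix.add_apply] <;> simp [hxj j] <;> field_simp <;> ring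
    · have hxj : ∀ j, x j = a * A 0 j + b * A 1 j := by
        intro j
        have := congrFun hab j
        simpa using this.symm
      refine ⟨vecMulVec ![-(b * a⁻¹), 1] (A 1), ?_, vecMulVec ![-a⁻¹, 0] x,
        mem_Rsub_span_iff.2 ⟨_, rfl⟩, ?_⟩
      · refine rowRank_vecMulVec ?_ hA1
        intro h0; have := congrFun h0 1; simp at this
      · funext i j
        fin_cases i <;>
          simp only [vecMulVec_apply, Matrix.add_apply] <;> simp [hxj j] <;> field_simp <;> ring

end Key

section Red
open Module Submodule

variable {F : Type*} [Field F] {m n : ℕ}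

lemma ncard_adj (A : Matrix (Fin m) (Fin n) F) (d : Submodule F (Fin n → F)) :
    {M : Matrix (Fin m) (Fin n) F | M ∈ Rsub d ∧ Adjacent M A}.ncard
      = {M : Matrix (Fin m) (Fin n) F | rowRank M = 1 ∧ ∃ N ∈ Rsub (m := m) d, M = A + N}.ncard := by
  have himg : {M : Matrix (Fin m) (Fin n) F | rowRank M = 1 ∧ ∃ N ∈ Rsub (m := m) d, M = A + N}
      = (fun M => A - M) '' {M | M ∈ Rsub d ∧ Adjacent M A} := by
    ext M
    simp only [Set.mem_setOf_eq, Set.mem_image]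
    constructor
    · rintro ⟨h1, N, hN, rfl⟩
      refine ⟨-N, ⟨fun i => ?_, ?_⟩, by rw [sub_neg_eq_add]⟩
      · show -(N i) ∈ d
        exact neg_mem (hN i)
      · show rowRank (-N - A) = 1
        have hh : (-N - A : Matrix (Fin m) (Fin n) F) = -(A + N) := by abel
        rw [hh, rowRank_neg]; exact h1
    · rintro ⟨M', ⟨hM'd, hadj⟩, rfl⟩
      refine ⟨?_, -M', fun i => neg_mem (hM'd i), sub_eq_add_neg A M'⟩
      have hh : (A - M' : Matrix (Fin m) (Fin n) F) = -(M' - A) := by abel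
      rw [hh, rowRank_neg]; exact hadj
  rw [himg, Set.ncard_image_of_injective _ sub_right_injective]

lemma col_sets (A : Matrix (Fin m) (Fin n) F) (e : Submodule Fᵐᵒᵖ (Fin m → F)) (y : Fin m → F)
    (h : ∀ v, v ∈ e ↔ v ∈ Submodule.span F {y}) :
    {M : Matrix (Fin m) (Fin n) F | M ∈ Lsub e ∧ Adjacent M A}
      = Matrix.transpose ''
        {M' : Matrix (Fin n) (Fin m) F | M' ∈ Rsub (Submodule.span F {y}) ∧ Adjacent M' Aᵀ} ∧
    {M : Matrix (Fin m) (Fin n) F | rowRank M = 1 ∧ ∃ N ∈ Lsub (n := n) e, M = A + N}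
      = Matrix.transpose '' {M' : Matrix (Fin n) (Fin m) F |
          rowRank M' = 1 ∧ ∃ N' ∈ Rsub (m := n) (Submodule.span F {y}), M' = Aᵀ + N'} := by
  have hLR : ∀ M : Matrix (Fin m) (Fin n) F, M ∈ Lsub e ↔ Mᵀ ∈ Rsub (Submodule.span F {y}) := by
    intro M
    constructor
    · intro hM j; exact (h _).1 (hM j)
    · intro hM j; exact (h _).2 (hM j)
  have hAdj : ∀ M' : Matrix (Fin n) (Fin m) F, Adjacent M'ᵀ A ↔ Adjacent M' Aᵀ := by
    intro M'
    show rowRank (M'ᵀ - A) = 1 ↔ rowRank (M' - Aᵀ) = 1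
    have hh : M'ᵀ - A = (M' - Aᵀ)ᵀ := by rw [Matrix.transpose_sub, Matrix.transpose_transpose]
    rw [hh, rowRank_transpose]
  constructor
  · ext M
    simp only [Set.mem_setOf_eq, Set.mem_image]
    constructor
    · rintro ⟨h1, h2⟩
      refine ⟨Mᵀ, ⟨(hLR M).1 h1, (hAdj Mᵀ).1 ?_⟩, Matrix.transpose_transpose M⟩
      rwa [Matrix.transpose_transpose]
    · rintro ⟨M', ⟨h1, h2⟩, rfl⟩
      refine ⟨(hLR M'ᵀ).2 ?_, (hAdj M').2 h2⟩
      rwa [Matrix.transpose_transpose]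
  · ext M
    simp only [Set.mem_setOf_eq, Set.mem_image]
    constructor
    · rintro ⟨h1, N, hN, rfl⟩
      refine ⟨(A + N)ᵀ, ⟨?_, Nᵀ, (hLR N).1 hN, ?_⟩, Matrix.transpose_transpose _⟩
      · rw [rowRank_transpose]; exact h1
      · rw [Matrix.transpose_add]
    · rintro ⟨M', ⟨h1, N', hN', rfl⟩, rfl⟩
      refine ⟨?_, N'ᵀ, (hLR N'ᵀ).2 (by rwa [Matrix.transpose_transpose]), ?_⟩
      · rw [rowRank_transpose]; exact h1
      · rw [Matrix.transpose_add, Matrix.transpose_transpose]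

lemma ncard_transpose (S : Set (Matrix (Fin n) (Fin m) F)) :
    (Matrix.transpose '' S).ncard = S.ncard :=
  Set.ncard_image_of_injective _ fun _ _ hh => Matrix.transpose_inj.1 hh

lemma exists_span_rep (d : Submodule F (Fin n → F)) (hd : finrank F d = 1) :
    ∃ x : Fin n → F, x ≠ 0 ∧ d = Submodule.span F {x} := by
  have hdb : d ≠ ⊥ := by
    intro hb; rw [hb, finrank_bot] at hd; omega
  obtain ⟨x, hxd, hx0⟩ := Submodule.exists_mem_ne_zero_of_ne_bot hdb
  have hle : Submodule.span F {x} ≤ d := (Submodule.span_singleton_le_iff_mem _ _).2 hxd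
  exact ⟨x, hx0, (Submodule.eq_of_le_of_finrank_eq hle
    (by rw [finrank_span_singleton hx0, hd])).symm⟩

lemma exists_span_rep_op [Fintype F] (e : Submodule Fᵐᵒᵖ (Fin m → F))
    (he : finrank Fᵐᵒᵖ e = 1) :
    ∃ y : Fin m → F, y ≠ 0 ∧ ∀ v, v ∈ e ↔ v ∈ Submodule.span F {y} := by
  haveI : FiniteDimensional Fᵐᵒᵖ (Fin m → F) := Module.Finite.of_finite
  have heb : e ≠ ⊥ := by
    intro hb; rw [hb, finrank_bot] at he; omega
  obtain ⟨y, hyd, hy0⟩ := Submodule.exists_mem_ne_zero_of_ne_bot heb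
  have hle : Submodule.span Fᵐᵒᵖ {y} ≤ e := (Submodule.span_singleton_le_iff_mem _ _).2 hyd
  have heq : e = Submodule.span Fᵐᵒᵖ {y} := (Submodule.eq_of_le_of_finrank_eq hle
    (by rw [finrank_span_singleton hy0, he])).symm
  refine ⟨y, hy0, fun v => ?_⟩
  rw [heq, Submodule.mem_span_singleton, Submodule.mem_span_singleton]
  constructor
  · rintro ⟨c, rfl⟩
    exact ⟨c.unop, funext fun i => mul_comm c.unop (y i)⟩
  · rintro ⟨a, rfl⟩
    refine ⟨MulOpposite.op a, funext fun i => ?_⟩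
    show y i * a = a * y i
    exact mul_comm _ _

end Red

/-- Lemma 4.2. -/
theorem stmt17 {F : Type*} [Field F] [Fintype F] (m n : ℕ) (hm : 0 < m) (hn : 0 < n)
    (A : Matrix (Fin m) (Fin n) F) (hA : rowRank A = 2)
    (d : Submodule F (Fin n → F)) (hd : Module.finrank F d = 1)
    (e : Submodule Fᵐᵒᵖ (Fin m → F)) (he : Module.finrank Fᵐᵒᵖ e = 1) :
    (({M : Matrix (Fin m) (Fin n) F | M ∈ Rsub d ∧ Adjacent M A}.ncard = 0 ∨
      {M : Matrix (Fin m) (Fin n) F | M ∈ Rsub d ∧ Adjacent M A}.ncard =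
        Fintype.card F) ∧
      (m = 2 ∧ n = 2 →
        {M : Matrix (Fin m) (Fin n) F | M ∈ Rsub d ∧ Adjacent M A}.ncard =
          Fintype.card F)) ∧
    (({M : Matrix (Fin m) (Fin n) F | M ∈ Lsub e ∧ Adjacent M A}.ncard = 0 ∨
      {M : Matrix (Fin m) (Fin n) F | M ∈ Lsub e ∧ Adjacent M A}.ncard =
        Fintype.card F) ∧
      (m = 2 ∧ n = 2 →
        {M : Matrix (Fin m) (Fin n) F | M ∈ Lsub e ∧ Adjacent M A}.ncard =
          Fintype.card F)) ∧
    (({M : Matrix (Fin m) (Fin n) F |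
        rowRank M = 1 ∧ ∃ N ∈ Rsub (m := m) d, M = A + N}.ncard = 0 ∨
      {M : Matrix (Fin m) (Fin n) F |
        rowRank M = 1 ∧ ∃ N ∈ Rsub (m := m) d, M = A + N}.ncard = Fintype.card F) ∧
      (m = 2 ∧ n = 2 →
        {M : Matrix (Fin m) (Fin n) F |
          rowRank M = 1 ∧ ∃ N ∈ Rsub (m := m) d, M = A + N}.ncard =
            Fintype.card F)) ∧
    (({M : Matrix (Fin m) (Fin n) F |
        rowRank M = 1 ∧ ∃ N ∈ Lsub (n := n) e, M = A + N}.ncard = 0 ∨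
      {M : Matrix (Fin m) (Fin n) F |
        rowRank M = 1 ∧ ∃ N ∈ Lsub (n := n) e, M = A + N}.ncard = Fintype.card F) ∧
      (m = 2 ∧ n = 2 →
        {M : Matrix (Fin m) (Fin n) F |
          rowRank M = 1 ∧ ∃ N ∈ Lsub (n := n) e, M = A + N}.ncard =
            Fintype.card F)) := by
  
  obtain ⟨x, hx0, hdspan⟩ := exists_span_rep d hd
  obtain ⟨y, hy0, hmemiff⟩ := exists_span_rep_op e he
  have hAt : rowRank Aᵀ = 2 := by rw [rowRank_transpose]; exact hA
  have K1 := key_count A hA x hx0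
  have K2 := key_count Aᵀ hAt y hy0
  obtain ⟨hc1, hc2⟩ := col_sets A e y hmemiff
  have h1 := ncard_adj A (Submodule.span F {x})
  have h2 := ncard_adj Aᵀ (Submodule.span F {y})
  rw [hdspan]
  refine ⟨⟨?_, ?_⟩, ⟨?_, ?_⟩, ⟨?_, ?_⟩, ⟨?_, ?_⟩⟩
  · rw [h1]; exact K1.1
  · intro hmn; rw [h1]; exact K1.2 hmn
  · rw [hc1, ncard_transpose, h2]; exact K2.1
  · intro hmn; rw [hc1, ncard_transpose, h2]; exact K2.2 ⟨hmn.2, hmn.1⟩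
  · exact K1.1
  · exact K1.2
  · rw [hc2, ncard_transpose]; exact K2.1
  · intro hmn; rw [hc2, ncard_transpose]; exact K2.2 ⟨hmn.2, hmn.1⟩
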